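/- Consider a linear dynamical system with x_0 = 0 and D = 0, i.e. x_{t+1} = A x_t + B u_t + w_t and y_t = C x_t + z_t, where the random vectors (u_t)_{t≥0}, (w_t)_{t≥0}, (z_t)_{t≥0} are mutually independent, all have mean zero and finite second moments, E[u_t u_t^⊤] = I_p, E[z_t z_t^⊤] = I_m, and E[w_t w_t^⊤] = Σ_w for every t. Then for all integers t₁ ≥ t₂ ≥ 0, E[y_{t₁} y_{t₂}^⊤] = Σ_{i=1}^{t₂} ( C A^{t₁−t₂+i−1} B (C A^{i−1} B)^⊤ + C A^{t₁−t₂+i−1} Σ_w (C A^{i−1})^⊤ ) + 1_{t₁=t₂} · I_m. -/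

import Mathlib

open MeasureTheory ProbabilityTheory
open scoped ProbabilityTheory

/-- Embedding of `ℝ^d` into `ℕ → ℝ` (by zero padding), used to state mutual independence of
random vectors of different dimensions as independence of a single family. -/
def embedVec (d : ℕ) (v : Fin d → ℝ) : ℕ → ℝ :=
  fun i => if h : i < d then v ⟨i, h⟩ else 0

lemma embedVec_coe {d : ℕ} (v : Fin d → ℝ) (a : Fin d) : embedVec d v ↑a = v a := by
  simp [embedVec]

private lemma integrable_mul_of_memℒp2 {Ω : Type*} [MeasureSpace Ω]
    [IsFiniteMeasure (ℙ : Measure Ω)] {f g : Ω → ℝ}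
    (hf : MemLp f 2 ℙ) (hg : MemLp g 2 ℙ) : Integrable (fun ω => f ω * g ω) ℙ := by
  rw [← memLp_one_iff_integrable]
  have h := hg.smul (φ := f) hf (p := 2) (q := 2) (r := 1)
    (hpqr := ⟨by norm_num [ENNReal.inv_two_add_inv_two]⟩)
  exact h

private lemma integral_sum_mul_sum {Ω ι κ : Type*} [MeasureSpace Ω]
    [IsFiniteMeasure (ℙ : Measure Ω)]
    (s : Finset ι) (t : Finset κ) (f : ι → Ω → ℝ) (g : κ → Ω → ℝ)
    (hf : ∀ i ∈ s, MemLp (f i) 2 ℙ) (hg : ∀ k ∈ t, MemLp (g k) 2 ℙ) :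
    ∫ ω, (∑ i ∈ s, f i ω) * (∑ k ∈ t, g k ω) = ∑ i ∈ s, ∑ k ∈ t, ∫ ω, f i ω * g k ω := by
  have h1 : ∀ i ∈ s, Integrable (fun ω => ∑ k ∈ t, f i ω * g k ω) ℙ := fun i hi =>
    integrable_finset_sum _ fun k hk => integrable_mul_of_memℒp2 (hf i hi) (hg k hk)
  calc ∫ ω, (∑ i ∈ s, f i ω) * (∑ k ∈ t, g k ω)
      = ∫ ω, ∑ i ∈ s, ∑ k ∈ t, f i ω * g k ω := by
        congr 1; funext ω; rw [Finset.sum_mul]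
        exact Finset.sum_congr rfl fun i _ => Finset.mul_sum _ _ _
    _ = ∑ i ∈ s, ∫ ω, ∑ k ∈ t, f i ω * g k ω := integral_finset_sum s h1
    _ = ∑ i ∈ s, ∑ k ∈ t, ∫ ω, f i ω * g k ω :=
        Finset.sum_congr rfl fun i hi => integral_finset_sum t fun k hk =>
          integrable_mul_of_memℒp2 (hf i hi) (hg k hk)

private lemma integral_const_mul_mul {Ω : Type*} [MeasureSpace Ω] (α β : ℝ) (X Y : Ω → ℝ) :
    ∫ ω, (α * X ω) * (β * Y ω) = α * β * ∫ ω, X ω * Y ω := by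
  rw [← integral_const_mul]; congr 1; funext ω; ring

/-- Collapsing a double sum over product index sets against a "diagonal" kernel. -/
private lemma sum_pair_delta {β : Type*} [Fintype β] [DecidableEq β] {t₁ t₂ : ℕ} (ht : t₂ ≤ t₁)
    (F G : ℕ × β → ℝ) (S : β → β → ℝ) :
    (∑ q ∈ Finset.range t₁ ×ˢ Finset.univ, ∑ q' ∈ Finset.range t₂ ×ˢ Finset.univ,
      F q * G q' * (if q.1 = q'.1 then S q.2 q'.2 else 0))
      = ∑ j ∈ Finset.range t₂, ∑ c : β, ∑ c' : β, F (j, c) * G (j, c') * S c c' := by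
  simp only [Finset.sum_product]
  have step1 : ∀ j ∈ Finset.range t₁,
      (∑ c : β, ∑ j' ∈ Finset.range t₂, ∑ c' : β,
        F (j, c) * G (j', c') * (if j = j' then S c c' else 0))
      = if j ∈ Finset.range t₂ then ∑ c : β, ∑ c' : β, F (j, c) * G (j, c') * S c c' else 0 := by
    intro j _
    rw [Finset.sum_comm]
    have : ∀ j' ∈ Finset.range t₂,
        (∑ c : β, ∑ c' : β, F (j, c) * G (j', c') * (if j = j' then S c c' else 0))
        = if j = j' then ∑ c : β, ∑ c' : β, F (j, c) * G (j', c') * S c c' else 0 := by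
      intro j' _
      by_cases h : j = j' <;> simp [h]
    rw [Finset.sum_congr rfl this, Finset.sum_ite_eq]
  rw [Finset.sum_congr rfl step1, Finset.sum_ite_mem,
    Finset.inter_eq_right.mpr (Finset.range_subset_range.mpr ht)]

private lemma mul_transpose_apply {m n p : ℕ} (X : Matrix (Fin m) (Fin p) ℝ)
    (Y : Matrix (Fin n) (Fin p) ℝ) (a : Fin m) (b : Fin n) :
    (X * Y.transpose) a b = ∑ c : Fin p, X a c * Y b c := by
  rw [Matrix.mul_apply]
  exact Finset.sum_congr rfl fun c _ => by rw [Matrix.transpose_apply]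

private lemma mul_mul_transpose_apply {m n : ℕ} (X : Matrix (Fin m) (Fin n) ℝ)
    (S : Matrix (Fin n) (Fin n) ℝ) (Y : Matrix (Fin m) (Fin n) ℝ) (a b : Fin m) :
    (X * S * Y.transpose) a b = ∑ c' : Fin n, ∑ c : Fin n, X a c * S c c' * Y b c' := by
  rw [Matrix.mul_apply]
  refine Finset.sum_congr rfl fun c' _ => ?_
  rw [Matrix.transpose_apply, Matrix.mul_apply, Finset.sum_mul]

theorem observation_covariance_formula
    {Ω : Type*} [MeasureSpace Ω] [IsProbabilityMeasure (ℙ : Measure Ω)]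
    (n p m : ℕ)
    (A : Matrix (Fin n) (Fin n) ℝ) (B : Matrix (Fin n) (Fin p) ℝ)
    (C : Matrix (Fin m) (Fin n) ℝ) (Sw : Matrix (Fin n) (Fin n) ℝ)
    (x : ℕ → Ω → Fin n → ℝ) (u : ℕ → Ω → Fin p → ℝ) (w : ℕ → Ω → Fin n → ℝ)
    (z : ℕ → Ω → Fin m → ℝ) (y : ℕ → Ω → Fin m → ℝ)
    (hx0 : ∀ ω : Ω, x 0 ω = 0)
    (hx : ∀ (t : ℕ) (ω : Ω), x (t + 1) ω = A.mulVec (x t ω) + B.mulVec (u t ω) + w t ω)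
    (hy : ∀ (t : ℕ) (ω : Ω), y t ω = C.mulVec (x t ω) + z t ω)
    (hmeasu : ∀ t, Measurable (u t)) (hmeasw : ∀ t, Measurable (w t))
    (hmeasz : ∀ t, Measurable (z t))
    -- mutual independence of all the `u t`, `w t`, `z t`
    (hindep : iIndepFun
      (fun idx : ℕ × Fin 3 =>
        if idx.2 = 0 then fun ω => embedVec p (u idx.1 ω)
        else if idx.2 = 1 then fun ω => embedVec n (w idx.1 ω)
        else fun ω => embedVec m (z idx.1 ω)) ℙ)
    -- mean zero
    (humean : ∀ t a, ∫ ω, u t ω a = 0)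
    (hwmean : ∀ t a, ∫ ω, w t ω a = 0)
    (hzmean : ∀ t a, ∫ ω, z t ω a = 0)
    -- finite second moments
    (humom : ∀ t a, MemLp (fun ω => u t ω a) 2 ℙ)
    (hwmom : ∀ t a, MemLp (fun ω => w t ω a) 2 ℙ)
    (hzmom : ∀ t a, MemLp (fun ω => z t ω a) 2 ℙ)
    -- covariances
    (hucov : ∀ t (a b : Fin p), ∫ ω, u t ω a * u t ω b = if a = b then 1 else 0)
    (hzcov : ∀ t (a b : Fin m), ∫ ω, z t ω a * z t ω b = if a = b then 1 else 0)
    (hwcov : ∀ t (a b : Fin n), ∫ ω, w t ω a * w t ω b = Sw a b)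
    (t₁ t₂ : ℕ) (ht : t₂ ≤ t₁) :
    (Matrix.of fun a b : Fin m => ∫ ω, y t₁ ω a * y t₂ ω b)
      = ∑ i ∈ Finset.Icc 1 t₂,
          (C * A ^ (t₁ - t₂ + i - 1) * B * (C * A ^ (i - 1) * B).transpose
            + C * A ^ (t₁ - t₂ + i - 1) * Sw * (C * A ^ (i - 1)).transpose)
        + (if t₁ = t₂ then (1 : Matrix (Fin m) (Fin m) ℝ) else 0) := by
  classical
  -- independence of distinct sources
  have keyind := fun (i j : ℕ × Fin 3) (hij : i ≠ j) => hindep.indepFun hij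
  have hUWind : ∀ s t (c : Fin p) (d : Fin n),
      IndepFun (fun ω => u s ω c) (fun ω => w t ω d) ℙ := by
    intro s t c d
    have h := ((keyind (s, 0) (t, 1) (by simp)).comp
      (measurable_pi_apply (c : ℕ)) (measurable_pi_apply (d : ℕ)))
    simpa [Function.comp_def, embedVec_coe] using h
  have hUZind : ∀ s t (c : Fin p) (d : Fin m),
      IndepFun (fun ω => u s ω c) (fun ω => z t ω d) ℙ := by
    intro s t c d
    have h := ((keyind (s, 0) (t, 2) (by simp)).comp
      (measurable_pi_apply (c : ℕ)) (measurable_pi_apply (d : ℕ)))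
    simpa [Function.comp_def, embedVec_coe] using h
  have hWZind : ∀ s t (c : Fin n) (d : Fin m),
      IndepFun (fun ω => w s ω c) (fun ω => z t ω d) ℙ := by
    intro s t c d
    have h := ((keyind (s, 1) (t, 2) (by simp)).comp
      (measurable_pi_apply (c : ℕ)) (measurable_pi_apply (d : ℕ)))
    simpa [Function.comp_def, embedVec_coe] using h
  have hUUind : ∀ s t, s ≠ t → ∀ (c : Fin p) (d : Fin p),
      IndepFun (fun ω => u s ω c) (fun ω => u t ω d) ℙ := by
    intro s t hst c d
    have h := ((keyind (s, 0) (t, 0) (by simp [hst])).comp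
      (measurable_pi_apply (c : ℕ)) (measurable_pi_apply (d : ℕ)))
    simpa [Function.comp_def, embedVec_coe] using h
  have hWWind : ∀ s t, s ≠ t → ∀ (c : Fin n) (d : Fin n),
      IndepFun (fun ω => w s ω c) (fun ω => w t ω d) ℙ := by
    intro s t hst c d
    have h := ((keyind (s, 1) (t, 1) (by simp [hst])).comp
      (measurable_pi_apply (c : ℕ)) (measurable_pi_apply (d : ℕ)))
    simpa [Function.comp_def, embedVec_coe] using h
  have hZZind : ∀ s t, s ≠ t → ∀ (c : Fin m) (d : Fin m),
      IndepFun (fun ω => z s ω c) (fun ω => z t ω d) ℙ := by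
    intro s t hst c d
    have h := ((keyind (s, 2) (t, 2) (by simp [hst])).comp
      (measurable_pi_apply (c : ℕ)) (measurable_pi_apply (d : ℕ)))
    simpa [Function.comp_def, embedVec_coe] using h
  -- second moment identities
  have hUW : ∀ s t (c : Fin p) (d : Fin n), ∫ ω, u s ω c * w t ω d = 0 := by
    intro s t c d
    have := (hUWind s t c d).integral_fun_mul_eq_mul_integral
      ((humom s c).aestronglyMeasurable) ((hwmom t d).aestronglyMeasurable)
    simpa [humean, hwmean] using this
  have hUZ : ∀ s t (c : Fin p) (d : Fin m), ∫ ω, u s ω c * z t ω d = 0 := by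
    intro s t c d
    have := (hUZind s t c d).integral_fun_mul_eq_mul_integral
      ((humom s c).aestronglyMeasurable) ((hzmom t d).aestronglyMeasurable)
    simpa [humean, hzmean] using this
  have hWZ : ∀ s t (c : Fin n) (d : Fin m), ∫ ω, w s ω c * z t ω d = 0 := by
    intro s t c d
    have := (hWZind s t c d).integral_fun_mul_eq_mul_integral
      ((hwmom s c).aestronglyMeasurable) ((hzmom t d).aestronglyMeasurable)
    simpa [hwmean, hzmean] using this
  have hWU : ∀ s t (c : Fin n) (d : Fin p), ∫ ω, w s ω c * u t ω d = 0 := by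
    intro s t c d
    have := ((hUWind t s d c).symm).integral_fun_mul_eq_mul_integral
      ((hwmom s c).aestronglyMeasurable) ((humom t d).aestronglyMeasurable)
    simpa [humean, hwmean] using this
  have hZU : ∀ s t (c : Fin m) (d : Fin p), ∫ ω, z s ω c * u t ω d = 0 := by
    intro s t c d
    have := ((hUZind t s d c).symm).integral_fun_mul_eq_mul_integral
      ((hzmom s c).aestronglyMeasurable) ((humom t d).aestronglyMeasurable)
    simpa [humean, hzmean] using this
  have hZW : ∀ s t (c : Fin m) (d : Fin n), ∫ ω, z s ω c * w t ω d = 0 := by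
    intro s t c d
    have := ((hWZind t s d c).symm).integral_fun_mul_eq_mul_integral
      ((hzmom s c).aestronglyMeasurable) ((hwmom t d).aestronglyMeasurable)
    simpa [hwmean, hzmean] using this
  have hUU : ∀ s t (c c' : Fin p), ∫ ω, u s ω c * u t ω c'
      = if s = t then (if c = c' then (1:ℝ) else 0) else 0 := by
    intro s t c c'
    by_cases h : s = t
    · subst h; simp [hucov]
    · rw [if_neg h]
      have := (hUUind s t h c c').integral_fun_mul_eq_mul_integral
        ((humom s c).aestronglyMeasurable) ((humom t c').aestronglyMeasurable)
      simpa [humean] using this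
  have hWWf : ∀ s t (c c' : Fin n), ∫ ω, w s ω c * w t ω c'
      = if s = t then Sw c c' else 0 := by
    intro s t c c'
    by_cases h : s = t
    · subst h; simp [hwcov]
    · rw [if_neg h]
      have := (hWWind s t h c c').integral_fun_mul_eq_mul_integral
        ((hwmom s c).aestronglyMeasurable) ((hwmom t c').aestronglyMeasurable)
      simpa [hwmean] using this
  have hZZ : ∀ s t (c c' : Fin m), ∫ ω, z s ω c * z t ω c'
      = if s = t then (if c = c' then (1:ℝ) else 0) else 0 := by
    intro s t c c'
    by_cases h : s = t
    · subst h; simp [hzcov]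
    · rw [if_neg h]
      have := (hZZind s t h c c').integral_fun_mul_eq_mul_integral
        ((hzmom s c).aestronglyMeasurable) ((hzmom t c').aestronglyMeasurable)
      simpa [hzmean] using this
  -- state representation
  have xrep : ∀ t ω, x t ω = ∑ j ∈ Finset.range t,
      (A ^ (t - 1 - j)).mulVec (B.mulVec (u j ω) + w j ω) := by
    intro t
    induction t with
    | zero => intro ω; simp [hx0]
    | succ t ih =>
      intro ω
      rw [hx t ω, ih ω, Finset.sum_range_succ]
      have h0 : (A ^ (t + 1 - 1 - t)).mulVec (B.mulVec (u t ω) + w t ω)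
          = B.mulVec (u t ω) + w t ω := by
        simp [Matrix.one_mulVec]
      have h1 : A.mulVec (∑ j ∈ Finset.range t,
            (A ^ (t - 1 - j)).mulVec (B.mulVec (u j ω) + w j ω))
          = ∑ j ∈ Finset.range t,
            (A ^ (t + 1 - 1 - j)).mulVec (B.mulVec (u j ω) + w j ω) := by
        have hmap := map_sum A.mulVecLin
          (fun j => (A ^ (t - 1 - j)).mulVec (B.mulVec (u j ω) + w j ω)) (Finset.range t)
        simp only [Matrix.mulVecLin_apply] at hmap
        rw [hmap]
        refine Finset.sum_congr rfl fun j hj => ?_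
        rw [Matrix.mulVec_mulVec]
        have hj' := Finset.mem_range.mp hj
        have he : t + 1 - 1 - j = (t - 1 - j) + 1 := by omega
        rw [he, pow_succ']
      rw [h0, h1, add_assoc]
  -- observation representation as a single finite sum
  set T : ℕ → Finset ((ℕ × Fin p) ⊕ ((ℕ × Fin n) ⊕ Unit)) := fun t =>
    (Finset.range t ×ˢ Finset.univ).disjSum
      ((Finset.range t ×ˢ Finset.univ).disjSum Finset.univ) with hT
  set f : ℕ → Fin m → ((ℕ × Fin p) ⊕ ((ℕ × Fin n) ⊕ Unit)) → Ω → ℝ := fun t a q ω =>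
    Sum.elim (fun jc => (C * A ^ (t - 1 - jc.1) * B) a jc.2 * u jc.1 ω jc.2)
      (Sum.elim (fun jc => (C * A ^ (t - 1 - jc.1)) a jc.2 * w jc.1 ω jc.2)
        (fun _ => (1:ℝ) * z t ω a)) q with hf
  have yrep : ∀ t ω (a : Fin m), y t ω a = ∑ q ∈ T t, f t a q ω := by
    intro t ω a
    rw [hy t ω]
    have hsplit : ∑ q ∈ T t, f t a q ω
        = (∑ j ∈ Finset.range t, ∑ c : Fin p, (C * A ^ (t - 1 - j) * B) a c * u j ω c)
          + ((∑ j ∈ Finset.range t, ∑ c : Fin n, (C * A ^ (t - 1 - j)) a c * w j ω c)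
            + z t ω a) := by
      simp [hT, hf, Finset.sum_disjSum, Finset.sum_product]
    rw [hsplit]
    have expand : ∀ j, C.mulVec ((A ^ (t - 1 - j)).mulVec (B.mulVec (u j ω) + w j ω)) a
        = (∑ c : Fin p, (C * A ^ (t - 1 - j) * B) a c * u j ω c)
          + ∑ c : Fin n, (C * A ^ (t - 1 - j)) a c * w j ω c := by
      intro j
      rw [Matrix.mulVec_mulVec, Matrix.mulVec_add, Matrix.mulVec_mulVec]
      simp [Matrix.mulVec, dotProduct]
    have hCx : C.mulVec (x t ω) a
        = ∑ j ∈ Finset.range t, ((∑ c : Fin p, (C * A ^ (t - 1 - j) * B) a c * u j ω c)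
            + ∑ c : Fin n, (C * A ^ (t - 1 - j)) a c * w j ω c) := by
      rw [xrep t ω]
      have hmap := map_sum C.mulVecLin
        (fun j => (A ^ (t - 1 - j)).mulVec (B.mulVec (u j ω) + w j ω)) (Finset.range t)
      simp only [Matrix.mulVecLin_apply] at hmap
      rw [hmap, Finset.sum_apply]
      exact Finset.sum_congr rfl fun j _ => expand j
    rw [Pi.add_apply, hCx, Finset.sum_add_distrib, add_assoc]
  -- memℒp of the summands
  have hfmem : ∀ t a q, MemLp (f t a q) 2 ℙ := by
    rintro t a (⟨j, c⟩ | ⟨j, c⟩ | _)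
    · simpa [hf] using (humom j c).const_mul ((C * A ^ (t - 1 - j) * B) a c)
    · simpa [hf] using (hwmom j c).const_mul ((C * A ^ (t - 1 - j)) a c)
    · simp only [hf, Sum.elim_inr, one_mul]
      exact hzmom t a
  ext a b
  have lhs1 : (Matrix.of fun a b : Fin m => ∫ ω, y t₁ ω a * y t₂ ω b) a b
      = ∑ q ∈ T t₁, ∑ q' ∈ T t₂, ∫ ω, f t₁ a q ω * f t₂ b q' ω := by
    rw [Matrix.of_apply]
    rw [show (fun ω => y t₁ ω a * y t₂ ω b)
        = fun ω => (∑ q ∈ T t₁, f t₁ a q ω) * (∑ q' ∈ T t₂, f t₂ b q' ω) from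
        funext fun ω => by rw [yrep, yrep]]
    exact integral_sum_mul_sum _ _ _ _ (fun q _ => hfmem t₁ a q) (fun q' _ => hfmem t₂ b q')
  rw [lhs1]
  -- split into the nine blocks and compute all elementary integrals
  simp only [hT, hf, Finset.sum_disjSum, Sum.elim_inl, Sum.elim_inr]
  simp only [integral_const_mul_mul]
  simp only [hUU, hUW, hUZ, hWU, hWWf, hWZ, hZU, hZW, hZZ, mul_zero,
    Finset.sum_const_zero, add_zero, zero_add, mul_one, one_mul]
  -- the two surviving double sums collapse along the diagonal
  have blockUU := sum_pair_delta (β := Fin p) ht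
    (fun q => (C * A ^ (t₁ - 1 - q.1) * B) a q.2)
    (fun q => (C * A ^ (t₂ - 1 - q.1) * B) b q.2)
    (fun c c' => if c = c' then (1:ℝ) else 0)
  have blockWW := sum_pair_delta (β := Fin n) ht
    (fun q => (C * A ^ (t₁ - 1 - q.1)) a q.2)
    (fun q => (C * A ^ (t₂ - 1 - q.1)) b q.2)
    (fun c c' => Sw c c')
  simp only at blockUU blockWW
  rw [blockUU, blockWW]
  -- compute the right-hand side entrywise
  have rhs1 : (∑ i ∈ Finset.Icc 1 t₂,
        (C * A ^ (t₁ - t₂ + i - 1) * B * (C * A ^ (i - 1) * B).transpose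
          + C * A ^ (t₁ - t₂ + i - 1) * Sw * (C * A ^ (i - 1)).transpose)
      + (if t₁ = t₂ then (1 : Matrix (Fin m) (Fin m) ℝ) else 0)) a b
      = (∑ i ∈ Finset.Icc 1 t₂,
          ((∑ c : Fin p, (C * A ^ (t₁ - t₂ + i - 1) * B) a c * (C * A ^ (i - 1) * B) b c)
            + ∑ c' : Fin n, ∑ c : Fin n,
                (C * A ^ (t₁ - t₂ + i - 1)) a c * Sw c c' * (C * A ^ (i - 1)) b c'))
        + (if t₁ = t₂ then (if a = b then (1:ℝ) else 0) else 0) := by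
    rw [Matrix.add_apply, Matrix.sum_apply]
    congr 1
    · refine Finset.sum_congr rfl fun i _ => ?_
      rw [Matrix.add_apply, mul_transpose_apply, mul_mul_transpose_apply]
    · rw [apply_ite (fun M : Matrix (Fin m) (Fin m) ℝ => M a b)]
      simp [Matrix.one_apply]
  rw [rhs1]
  -- final reindexing
  have main : (∑ j ∈ Finset.range t₂, ∑ c : Fin p, ∑ c' : Fin p,
        (C * A ^ (t₁ - 1 - j) * B) a c * ((C * A ^ (t₂ - 1 - j) * B) b c')
          * (if c = c' then (1:ℝ) else 0))
      + (∑ j ∈ Finset.range t₂, ∑ c : Fin n, ∑ c' : Fin n,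
        (C * A ^ (t₁ - 1 - j)) a c * ((C * A ^ (t₂ - 1 - j)) b c') * Sw c c')
      = ∑ i ∈ Finset.Icc 1 t₂,
          ((∑ c : Fin p, (C * A ^ (t₁ - t₂ + i - 1) * B) a c * (C * A ^ (i - 1) * B) b c)
            + ∑ c' : Fin n, ∑ c : Fin n,
                (C * A ^ (t₁ - t₂ + i - 1)) a c * Sw c c' * (C * A ^ (i - 1)) b c') := by
    rw [← Finset.sum_add_distrib]
    refine Finset.sum_nbij' (fun j => t₂ - j) (fun i => t₂ - i) ?_ ?_ ?_ ?_ ?_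
    · intro j hj; simp only [Finset.mem_range] at hj; simp only [Finset.mem_Icc]; omega
    · intro i hi; simp only [Finset.mem_Icc] at hi; simp only [Finset.mem_range]; omega
    · intro j hj; simp only [Finset.mem_range] at hj; show t₂ - (t₂ - j) = j; omega
    · intro i hi; simp only [Finset.mem_Icc] at hi; show t₂ - (t₂ - i) = i; omega
    · intro j hj
      simp only [Finset.mem_range] at hj
      have e1 : t₁ - t₂ + (t₂ - j) - 1 = t₁ - 1 - j := by omega
      have e2 : t₂ - j - 1 = t₂ - 1 - j := by omega
      rw [e1, e2]
      congr 1
      · refine Finset.sum_congr rfl fun c _ => ?_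
        simp [Finset.sum_ite_eq, mul_ite]
      · rw [Finset.sum_comm]
        exact Finset.sum_congr rfl fun c' _ => Finset.sum_congr rfl fun c _ => by ring
  rw [← main]
  simp
  ring
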